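/- If 0 < θ < 1 and x* > 0 is a fixed point of f(x) = L((1+x)/(1+θ+2x))², then |f'(x*)| < 1 (so x* is attracting). -/

import Mathlib

theorem fixed_point_attracting_theta_lt_one (θ L : ℝ) (hθ0 : 0 < θ) (hθ1 : θ < 1) (hL : 0 < L)
    (f : ℝ → ℝ) (hf : ∀ x : ℝ, f x = L * ((1 + x) / (1 + θ + 2 * x)) ^ 2)
    (x : ℝ) (hx : 0 < x) (hfix : f x = x) :
    |deriv f x| < 1 := by
  have hfe : f = fun y : ℝ => L * ((1 + y) / (1 + θ + 2 * y)) ^ 2 := funext hf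
  have hd : (0:ℝ) < 1 + θ + 2 * x := by linarith
  have hd' : (1 + θ + 2 * x) ≠ 0 := ne_of_gt hd
  have h1x : (0:ℝ) < 1 + x := by linarith
  have hnum : HasDerivAt (fun y : ℝ => 1 + y) 1 x := by
    simpa using (hasDerivAt_id x).const_add 1
  have hden : HasDerivAt (fun y : ℝ => 1 + θ + 2 * y) 2 x := by
    simpa using ((hasDerivAt_id x).const_mul 2).const_add (1 + θ)
  have hq : HasDerivAt (fun y : ℝ => (1 + y) / (1 + θ + 2 * y))
      ((1 * (1 + θ + 2 * x) - (1 + x) * 2) / (1 + θ + 2 * x) ^ 2) x := hnum.div hden hd'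
  have hp : HasDerivAt (fun y : ℝ => ((1 + y) / (1 + θ + 2 * y)) ^ 2)
      (2 * ((1 + x) / (1 + θ + 2 * x)) ^ 1 *
        ((1 * (1 + θ + 2 * x) - (1 + x) * 2) / (1 + θ + 2 * x) ^ 2)) x := by
    simpa using hq.fun_pow 2
  have hD : HasDerivAt f (L * (2 * ((1 + x) / (1 + θ + 2 * x)) ^ 1 *
      ((1 * (1 + θ + 2 * x) - (1 + x) * 2) / (1 + θ + 2 * x) ^ 2))) x := by
    rw [hfe]; exact hp.const_mul L
  have hderiv : deriv f x = L * (2 * ((1 + x) / (1 + θ + 2 * x)) ^ 1 *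
      ((1 * (1 + θ + 2 * x) - (1 + x) * 2) / (1 + θ + 2 * x) ^ 2)) := hD.deriv
  -- fixed point equation
  have hfix' : L * (1 + x) ^ 2 = x * (1 + θ + 2 * x) ^ 2 := by
    have := hfix
    rw [hf x] at this
    field_simp at this
    linarith [this]
  have hDval : deriv f x = 2 * x * (θ - 1) / ((1 + x) * (1 + θ + 2 * x)) := by
    rw [hderiv]
    field_simp
    linear_combination (θ - 1) * hfix'
  rw [hDval, abs_lt]
  have hpos : (0:ℝ) < (1 + x) * (1 + θ + 2 * x) := mul_pos h1x hd
  constructor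
  · rw [neg_lt, ← neg_div]
    rw [div_lt_one hpos]
    nlinarith
  · have : 2 * x * (θ - 1) / ((1 + x) * (1 + θ + 2 * x)) < 0 := by
      apply div_neg_of_neg_of_pos _ hpos
      nlinarith
    linarith
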